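/- arXiv:math/0506094 — 2 statements merged into one kernel-verified Lean document; each statement's English description precedes it below -/
import Mathlib

section
/- Let A be a commutative local principal ideal ring with maximal ideal (π), and let M and M' be two free rank-1 direct summands of A² (i.e., submodules generated by vectors with at least one unit coordinate). Then M ∩ M' is isomorphic as an A-module to A/(π^r) for some 0 ≤ r ≤ k, where k is the length of A (with A/(π^k) = A). -/
section Aux
variable {A : Type*} [CommRing A] [IsLocalRing A] [IsPrincipalIdealRing A]

lemma elem_form (π : A) (k : ℕ) (hmax : IsLocalRing.maximalIdeal A = Ideal.span {π})
    (hk0 : π ^ k = 0) (a : A) (ha : a ≠ 0) :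
    ∃ (i : ℕ) (u : A), i < k ∧ IsUnit u ∧ a = u * π ^ i := by
  have hPk : a ∉ Ideal.span {π ^ k} := by
    rw [hk0, Ideal.span_singleton_eq_bot.mpr rfl]
    simpa using ha
  have hex : ∃ n, a ∉ Ideal.span {π ^ n} := ⟨k, hPk⟩
  classical
  set m := Nat.find hex with hm
  have hmk : m ≤ k := Nat.find_le hPk
  have h0 : a ∈ Ideal.span {π ^ 0} := by simp [Ideal.span_singleton_one]
  have hm1 : 1 ≤ m := by
    rcases Nat.eq_zero_or_pos m with h | h
    · exact absurd h0 (by rw [← h]; exact Nat.find_spec hex)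
    · exact h
  have hmem : a ∈ Ideal.span {π ^ (m - 1)} := by
    by_contra h
    have hle : Nat.find hex ≤ m - 1 := Nat.find_le h
    omega
  have hnot : a ∉ Ideal.span {π ^ m} := Nat.find_spec hex
  rw [Ideal.mem_span_singleton] at hmem
  obtain ⟨c, hc⟩ := hmem
  have hcu : IsUnit c := by
    by_contra hcnu
    have : c ∈ IsLocalRing.maximalIdeal A := hcnu
    rw [hmax, Ideal.mem_span_singleton] at this
    obtain ⟨d, hd⟩ := this
    apply hnot
    rw [Ideal.mem_span_singleton]
    refine ⟨d, ?_⟩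
    have : m = (m - 1) + 1 := by omega
    rw [this, pow_succ, hc, hd]; ring
  exact ⟨m - 1, c, by omega, hcu, by rw [hc]; ring⟩

lemma pow_ne (π : A) (k : ℕ) (hk1 : π ^ (k - 1) ≠ 0) {j : ℕ} (hj : j < k) : π ^ j ≠ 0 := by
  intro h
  apply hk1
  have : k - 1 = j + (k - 1 - j) := by omega
  rw [this, pow_add, h, zero_mul]

end Aux

theorem stmt6 {A : Type*} [CommRing A] [IsLocalRing A] [IsPrincipalIdealRing A]
    (π : A) (k : ℕ) (hmax : IsLocalRing.maximalIdeal A = Ideal.span {π})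
    (hk0 : π ^ k = 0) (hk1 : π ^ (k - 1) ≠ 0)
    (v w : Fin 2 → A) (hv : IsUnit (v 0) ∨ IsUnit (v 1)) (hw : IsUnit (w 0) ∨ IsUnit (w 1)) :
    ∃ r : ℕ, r ≤ k ∧
      Nonempty ((↥(Submodule.span A {v} ⊓ Submodule.span A {w})) ≃ₗ[A]
        A ⧸ Ideal.span {π ^ r}) := by
  classical
  set φ := LinearMap.toSpanSingleton A (Fin 2 → A) v with hφ
  have hinj : Function.Injective φ := by
    rw [injective_iff_map_eq_zero]
    intro a ha
    have : ∀ i, a * v i = 0 := fun i => congrFun ha i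
    rcases hv with h | h
    · exact h.mul_left_eq_zero.mp (this 0)
    · exact h.mul_left_eq_zero.mp (this 1)
  set I : Submodule A A := Submodule.comap φ (Submodule.span A {w}) with hI
  have hmap : Submodule.map φ I = Submodule.span A {v} ⊓ Submodule.span A {w} := by
    rw [hI, Submodule.map_comap_eq, ← LinearMap.span_singleton_eq_range]
  -- classify I
  obtain ⟨g, hg⟩ := (IsPrincipalIdealRing.principal I).principal
  obtain ⟨s, hsk, hIs⟩ : ∃ s ≤ k, I = Ideal.span {π ^ s} := by
    by_cases hg0 : g = 0
    · exact ⟨k, le_rfl, by rw [hg, hg0, hk0]⟩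
    · obtain ⟨i, u, hik, hu, hgu⟩ := elem_form π k hmax hk0 g hg0
      refine ⟨i, hik.le, ?_⟩
      rw [hg, hgu]
      show Ideal.span {u * π ^ i} = Ideal.span {π ^ i}
      exact Ideal.span_singleton_mul_left_unit hu _
  set ψ := LinearMap.toSpanSingleton A A (π ^ s) with hψ
  have hker : LinearMap.ker ψ = Ideal.span {π ^ (k - s)} := by
    ext x
    simp only [LinearMap.mem_ker, hψ, LinearMap.toSpanSingleton_apply, smul_eq_mul,
      Ideal.mem_span_singleton]
    constructor
    · intro hx
      by_cases hx0 : x = 0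
      · exact ⟨0, by rw [hx0, mul_zero]⟩
      · obtain ⟨i, u, hik, hu, hxu⟩ := elem_form π k hmax hk0 x hx0
        have hzero : u * π ^ (i + s) = 0 := by rw [pow_add, ← mul_assoc, ← hxu, hx]
        have hpz : π ^ (i + s) = 0 := by
          obtain ⟨u', hu'⟩ := hu
          have := congrArg (fun y => (↑u'⁻¹ : A) * y) hzero
          simpa [← hu', ← mul_assoc] using this
        have his : k ≤ i + s := by
          by_contra h
          exact pow_ne π k hk1 (by omega) hpz
        refine ⟨u * π ^ (i - (k - s)), ?_⟩
        rw [hxu, mul_comm (π ^ (k - s)), mul_assoc, ← pow_add]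
        congr 2
        omega
    · rintro ⟨c, hc⟩
      have h1 : (k - s) + s = k := by omega
      calc x * π ^ s = c * π ^ ((k - s) + s) := by rw [hc, pow_add]; ring
        _ = 0 := by rw [h1, hk0, mul_zero]
  have hrange : LinearMap.range ψ = Ideal.span {π ^ s} :=
    (LinearMap.span_singleton_eq_range A A (π ^ s)).symm
  refine ⟨k - s, by omega, ⟨?_⟩⟩
  exact (LinearEquiv.ofEq _ _ hmap.symm).trans <|
    (Submodule.equivMapOfInjective φ hinj I).symm.trans <|
    (LinearEquiv.ofEq _ _ (by rw [hrange, ← hIs] : I = LinearMap.range ψ)).trans <|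
    ψ.quotKerEquivRange.symm.trans <|
    Submodule.quotEquivOfEq _ _ hker
end

section
/- Let A be a commutative local principal ideal ring of finite length k with maximal ideal (π), and let i, j, l, j', a be as follows: k > j > max{i,l} ≥ min{i,l} > 0 and a, a' units in A. Then the equation (1 − a'a^{−1})y₁₁ = (π^{j−i}a + π^l)x₁₂ + (π^i − π^{j−l}a')y₁₂ has a solution with y₁₁ a unit and x₁₂, y₁₂ ∈ A, considered modulo π^{k−j}, if and only if v(a − a') ≥ min{ v(π^{j−i}a + π^l), v(π^i − a'π^{j−l}), k−j }. -/
/-- The valuation of `x`, truncated at the length `k`: the largest `m ≤ k` with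
`π ^ m ∣ x`.  In particular `pval π k 0 = k`. -/
noncomputable def pval {A : Type*} [CommRing A] (π : A) (k : ℕ) (x : A) : ℕ :=
  sSup {m : ℕ | m ≤ k ∧ π ^ m ∣ x}

lemma pval_spec {A : Type*} [CommRing A] (π : A) (k : ℕ) (x : A) :
    pval π k x ≤ k ∧ π ^ (pval π k x) ∣ x := by
  have h : pval π k x ∈ {m : ℕ | m ≤ k ∧ π ^ m ∣ x} :=
    Nat.sSup_mem ⟨0, by simp⟩ ⟨k, fun m hm => hm.1⟩
  exact h

lemma le_pval {A : Type*} [CommRing A] {π : A} {k m : ℕ} {x : A}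
    (hm : m ≤ k) (hd : π ^ m ∣ x) : m ≤ pval π k x :=
  le_csSup ⟨k, fun n hn => hn.1⟩ ⟨hm, hd⟩

lemma dvd_of_le_pval {A : Type*} [CommRing A] {π : A} {k m : ℕ} {x : A}
    (h : m ≤ pval π k x) : π ^ m ∣ x :=
  (pow_dvd_pow π h).trans (pval_spec π k x).2

lemma pval_factor {A : Type*} [CommRing A] [IsLocalRing A] {π : A} {k : ℕ}
    (hmax : IsLocalRing.maximalIdeal A = Ideal.span {π}) (hk0 : π ^ k = 0)
    (x : A) : ∃ u : A, IsUnit u ∧ x = u * π ^ (pval π k x) := by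
  obtain ⟨hle, hdv⟩ := pval_spec π k x
  set v := pval π k x with hvdef
  obtain ⟨y, hy⟩ := hdv
  by_cases hu : IsUnit y
  · exact ⟨y, hu, by rw [hy]; ring⟩
  rcases eq_or_lt_of_le hle with hv | hv
  · refine ⟨1, isUnit_one, ?_⟩
    have hx0 : x = 0 := by rw [hy, hv, hk0, zero_mul]
    rw [hx0, hv, hk0]; ring
  · exfalso
    have hmem : y ∈ IsLocalRing.maximalIdeal A :=
      (IsLocalRing.mem_maximalIdeal y).mpr (mem_nonunits_iff.mpr hu)
    rw [hmax, Ideal.mem_span_singleton] at hmem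
    obtain ⟨z, hz⟩ := hmem
    have hdvd : π ^ (v + 1) ∣ x := ⟨z, by rw [hy, hz, pow_succ]; ring⟩
    have := le_pval hv hdvd
    omega

theorem stmt16 {A : Type*} [CommRing A] [IsLocalRing A] [IsPrincipalIdealRing A]
    (π : A) (k i j l : ℕ) (hmax : IsLocalRing.maximalIdeal A = Ideal.span {π})
    (hk0 : π ^ k = 0) (hk1 : π ^ (k - 1) ≠ 0)
    (hjk : j < k) (hij : i < j) (hlj : l < j) (hi : 0 < i) (hl : 0 < l)
    (a a' : A) (ha : IsUnit a) (ha' : IsUnit a') :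
    (∃ y₁₁ x₁₂ y₁₂ : A, IsUnit y₁₁ ∧
        π ^ (k - j) ∣ ((1 - a' * Ring.inverse a) * y₁₁ -
          ((π ^ (j - i) * a + π ^ l) * x₁₂ + (π ^ i - π ^ (j - l) * a') * y₁₂))) ↔
      pval π k (a - a') ≥
        min (min (pval π k (π ^ (j - i) * a + π ^ l))
          (pval π k (π ^ i - a' * π ^ (j - l)))) (k - j) := by
  set b := Ring.inverse a with hb_def
  have hb : b * a = 1 := Ring.inverse_mul_cancel a ha
  set v1 := pval π k (π ^ (j - i) * a + π ^ l) with hv1_def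
  set v2 := pval π k (π ^ i - a' * π ^ (j - l)) with hv2_def
  set M := min (min v1 v2) (k - j) with hM_def
  have hMk : M ≤ k := le_trans (min_le_right _ _) (Nat.sub_le k j)
  have hMv1 : M ≤ v1 := le_trans (min_le_left _ _) (min_le_left _ _)
  have hMv2 : M ≤ v2 := le_trans (min_le_left _ _) (min_le_right _ _)
  have hMkj : M ≤ k - j := min_le_right _ _
  constructor
  · rintro ⟨y₁₁, x₁₂, y₁₂, hy, hdvd⟩
    obtain ⟨t, ht⟩ := hdvd
    have hd1 : π ^ M ∣ (π ^ (j - i) * a + π ^ l) :=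
      (pow_dvd_pow π hMv1).trans (pval_spec π k _).2
    have hd2 : π ^ M ∣ (π ^ i - π ^ (j - l) * a') := by
      have h := (pow_dvd_pow π hMv2).trans (pval_spec π k _).2
      rwa [show π ^ i - a' * π ^ (j - l) = π ^ i - π ^ (j - l) * a' by ring] at h
    have hd3 : π ^ M ∣ π ^ (k - j) * t := Dvd.dvd.mul_right (pow_dvd_pow π hMkj) t
    have hdc : π ^ M ∣ (1 - a' * b) * y₁₁ := by
      have heq : (1 - a' * b) * y₁₁ = (π ^ (j - i) * a + π ^ l) * x₁₂ +
          (π ^ i - π ^ (j - l) * a') * y₁₂ + π ^ (k - j) * t := by linear_combination ht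
      rw [heq]
      exact dvd_add (dvd_add (hd1.mul_right _) (hd2.mul_right _)) hd3
    obtain ⟨w, hw⟩ := hy.exists_right_inv
    have hfin : π ^ M ∣ a - a' := by
      have h2 : a - a' = ((1 - a' * b) * y₁₁) * (w * a) := by
        linear_combination (-((1 - a' * b) * a)) * hw + a' * hb
      rw [h2]; exact hdc.mul_right _
    exact le_pval hMk hfin
  · intro hge
    obtain ⟨s, hs⟩ : π ^ M ∣ a - a' := dvd_of_le_pval hge
    have hcb : 1 - a' * b = π ^ M * (b * s) := by linear_combination b * hs - hb
    have hcases : M = v1 ∨ M = v2 ∨ M = k - j := by omega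
    rcases hcases with hMe | hMe | hMe
    · obtain ⟨u, hu, hc1⟩ := pval_factor hmax hk0 (π ^ (j - i) * a + π ^ l)
      rw [← hv1_def] at hc1
      obtain ⟨w, hw⟩ := hu.exists_right_inv
      refine ⟨1, w * (b * s), 0, isUnit_one, 0, ?_⟩
      have hcb' : 1 - a' * b = π ^ v1 * (b * s) := hMe ▸ hcb
      linear_combination hcb' - (w * (b * s)) * hc1 - (π ^ v1 * (b * s)) * hw
    · obtain ⟨u, hu, hc2⟩ := pval_factor hmax hk0 (π ^ i - a' * π ^ (j - l))
      rw [← hv2_def] at hc2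
      obtain ⟨w, hw⟩ := hu.exists_right_inv
      refine ⟨1, 0, w * (b * s), isUnit_one, 0, ?_⟩
      have hcb' : 1 - a' * b = π ^ v2 * (b * s) := hMe ▸ hcb
      linear_combination hcb' - (w * (b * s)) * hc2 - (π ^ v2 * (b * s)) * hw
    · refine ⟨1, 0, 0, isUnit_one, b * s, ?_⟩
      have hcb' : 1 - a' * b = π ^ (k - j) * (b * s) := hMe ▸ hcb
      linear_combination hcb'
end
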